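/- Let f ∈ (0,1) and κ, γ₁, γ₂, γ₃ > 0, and let u* ∈ [0,1]⁴ be a steady state of the ZIP regulatory system. Then the determinant of the Jacobian matrix of F evaluated at u* is strictly positive: det J(u*) > 0. -/

import Mathlib

/-- The ZIP regulatory vector field on ℝ⁴ (components indexed by `Fin 4`). -/
noncomputable def zipField (κ γ₁ γ₂ γ₃ f : ℝ) (u : Fin 4 → ℝ) : Fin 4 → ℝ :=
  ![κ * (u 2) ^ 2 * (1 - u 0) - u 0,
    u 0 * f - u 1,
    1 - γ₁ * u 2 * u 3 - u 2,
    γ₂ * u 1 - γ₃ * u 2 * u 3 - (1 + γ₂ * u 1) * u 3]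

/-- The Jacobian matrix of the ZIP regulatory vector field at a point u. -/
noncomputable def zipJacobian (κ γ₁ γ₂ γ₃ f : ℝ) (u : Fin 4 → ℝ) :
    Matrix (Fin 4) (Fin 4) ℝ :=
  !![-(κ * (u 2) ^ 2) - 1, 0, 2 * κ * u 2 * (1 - u 0), 0;
     f, -1, 0, 0;
     0, 0, -(γ₁ * u 3) - 1, -(γ₁ * u 2);
     0, γ₂ * (1 - u 3), -(γ₃ * u 3), -(γ₃ * u 2) - 1 - γ₂ * u 1]

/-- the determinant of the Jacobian at any steady state in
[0,1]⁴ is strictly positive. -/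
theorem zip_jacobian_det_pos
    (κ γ₁ γ₂ γ₃ f : ℝ) (hκ : 0 < κ) (hγ₁ : 0 < γ₁) (hγ₂ : 0 < γ₂) (hγ₃ : 0 < γ₃)
    (hf : f ∈ Set.Ioo (0 : ℝ) 1)
    (u : Fin 4 → ℝ) (hu : ∀ i, u i ∈ Set.Icc (0 : ℝ) 1)
    (hsteady : zipField κ γ₁ γ₂ γ₃ f u = 0) :
    0 < (zipJacobian κ γ₁ γ₂ γ₃ f u).det := by
  obtain ⟨hf0, hf1⟩ := hf
  obtain ⟨h00, h01⟩ := hu 0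
  obtain ⟨h10, h11⟩ := hu 1
  obtain ⟨h20, h21⟩ := hu 2
  obtain ⟨h30, h31⟩ := hu 3
  rw [zipJacobian]
  simp [Matrix.det_succ_row_zero, Fin.sum_univ_succ, Fin.succAbove, -Fin.val_fin_lt]
  ring_nf
  nlinarith [mul_nonneg h20 h10, mul_nonneg (mul_nonneg h20 h10) h30,
    mul_nonneg h20 h30, mul_nonneg h10 h30,
    mul_pos hκ (mul_pos hγ₁ hγ₂),
    mul_nonneg (mul_nonneg (sq_nonneg (u 2)) (sub_nonneg.2 h01)) (sub_nonneg.2 h31),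
    mul_pos hf0 (mul_pos hκ (mul_pos hγ₁ hγ₂)),
    mul_nonneg (mul_nonneg (mul_nonneg (mul_pos hf0 (mul_pos hκ (mul_pos hγ₁ hγ₂))).le (sq_nonneg (u 2))) (sub_nonneg.2 h01)) (sub_nonneg.2 h31),
    mul_pos hγ₁ hγ₂, mul_pos hγ₁ hγ₃, mul_pos hγ₂ hγ₃, sq_nonneg (u 2),
    mul_nonneg (mul_pos hγ₁ hγ₂).le (mul_nonneg h10 h30),
    mul_nonneg hκ.le (sq_nonneg (u 2)),
    mul_nonneg (mul_nonneg hκ.le (sq_nonneg (u 2))) (mul_nonneg (mul_pos hγ₁ hγ₂).le (mul_nonneg h10 h30)),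
    mul_nonneg (mul_nonneg hκ.le (sq_nonneg (u 2))) (mul_nonneg hγ₃.le h20),
    mul_nonneg (mul_nonneg hκ.le (sq_nonneg (u 2))) (mul_nonneg hγ₂.le h10),
    mul_nonneg (mul_nonneg hκ.le (sq_nonneg (u 2))) (mul_nonneg hγ₁.le h30),
    mul_nonneg hγ₃.le h20, mul_nonneg hγ₂.le h10, mul_nonneg hγ₁.le h30,
    mul_nonneg (mul_nonneg hγ₁.le h30) (mul_nonneg hγ₂.le h10)]
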